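/- For every parse tree T in the parse tree algebra of a class C, the term representing T is unique up to associativity and commutativity of the parallel composition operations: any two ground F_C-terms t_1, t_2 with t_1 and t_2 both mapping to T under the collapse operation are equal modulo AC of ∥. -/

import Mathlib

/-- A single-sorted finite signature: function symbols with arities. -/
structure Sig where
  Symb : Type
  ar : Symb → ℕ

/-- An algebra over a signature. -/
structure Alg (σ : Sig) where
  U : Type
  op : ∀ f : σ.Symb, (Fin (σ.ar f) → U) → U

/-- A homomorphism between two algebras over the same signature. -/
structure Hom (σ : Sig) (A B : Alg σ) where
  toFun : A.U → B.U
  map_op : ∀ (f : σ.Symb) (args : Fin (σ.ar f) → A.U),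
    toFun (A.op f args) = B.op f (fun i => toFun (args i))

/-- A set `L` is recognizable in `A` if it is the preimage of some subset of a
(locally) finite algebra under a homomorphism. -/
def Recognizable {σ : Sig} (A : Alg σ) (L : Set A.U) : Prop :=
  ∃ (B : Alg σ) (_ : Finite B.U) (h : Hom σ A B) (C : Set B.U), L = h.toFun ⁻¹' C

/-- Terms over a signature with variables from `V`. -/
inductive Term (σ : Sig) (V : Type) : Type
  | var : V → Term σ V
  | app : (f : σ.Symb) → (Fin (σ.ar f) → Term σ V) → Term σ V

/-- Evaluation of a term in an algebra under a valuation of the variables. -/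
def evalT {σ : Sig} (A : Alg σ) {V : Type} (ρ : V → A.U) : Term σ V → A.U
  | .var x => ρ x
  | .app f args => A.op f (fun i => evalT A ρ (args i))

/-- Unordered parse trees, represented as ordered trees (to be compared up to
permutation): a node carries a finite family of labeled edges, each attached to
`ar f` subtrees. -/
inductive PT (σ : Sig) : Type
  | node (n : ℕ) (f : Fin n → σ.Symb) (child : ∀ i : Fin n, Fin (σ.ar (f i)) → PT σ)

/-- Build a parse-tree node from a list of labeled edges. -/
def ofList {σ : Sig} (l : List ((f : σ.Symb) × (Fin (σ.ar f) → PT σ))) : PT σ :=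
  PT.node l.length (fun i => (l.get i).1) (fun i => (l.get i).2)

open Classical

/-- Collapse a ground term to the list of edge components of its root node:
maximal `∥`-subterms are flattened, other symbols become edges. -/
noncomputable def collapseL {σ : Sig} (par : σ.Symb) (h2 : σ.ar par = 2) :
    Term σ Empty → List ((f : σ.Symb) × (Fin (σ.ar f) → PT σ))
  | .var x => x.elim
  | .app f args =>
    if h : f = par then
      have ha : σ.ar f = 2 := by rw [h, h2]
      collapseL par h2 (args ⟨0, by omega⟩) ++ collapseL par h2 (args ⟨1, by omega⟩)
    else
      [⟨f, fun i => ofList (collapseL par h2 (args i))⟩]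

/-- The parse tree of a ground term. -/
noncomputable def collapse {σ : Sig} (par : σ.Symb) (h2 : σ.ar par = 2) (t : Term σ Empty) : PT σ :=
  ofList (collapseL par h2 t)

/-- Equality of parse trees up to permutation of the edges at each node. -/
inductive PTeq {σ : Sig} : PT σ → PT σ → Prop
  | mk (n n' : ℕ) (f : Fin n → σ.Symb) (f' : Fin n' → σ.Symb)
      (c : ∀ i : Fin n, Fin (σ.ar (f i)) → PT σ)
      (c' : ∀ i : Fin n', Fin (σ.ar (f' i)) → PT σ)
      (e : Fin n ≃ Fin n') (hf : ∀ i, f' (e i) = f i)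
      (hc : ∀ (i : Fin n) (j : Fin (σ.ar (f i))),
        PTeq (c i j) (c' (e i) (Fin.cast (by rw [hf i]) j))) :
      PTeq (.node n f c) (.node n' f' c')

/-- The binary parallel composition term. -/
def par2 {σ : Sig} (par : σ.Symb) (h2 : σ.ar par = 2) (a b : Term σ Empty) :
    Term σ Empty :=
  .app par (fun i => if (i : ℕ) = 0 then a else b)

/-- Equality of ground terms modulo associativity and commutativity of `∥`. -/
inductive ACeq {σ : Sig} (par : σ.Symb) (h2 : σ.ar par = 2) :
    Term σ Empty → Term σ Empty → Prop
  | refl (t) : ACeq par h2 t t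
  | symm {s t} : ACeq par h2 s t → ACeq par h2 t s
  | trans {s t u} : ACeq par h2 s t → ACeq par h2 t u → ACeq par h2 s u
  | congr (f : σ.Symb) (args args' : Fin (σ.ar f) → Term σ Empty) :
      (∀ i, ACeq par h2 (args i) (args' i)) →
      ACeq par h2 (.app f args) (.app f args')
  | assoc (a b c) :
      ACeq par h2 (par2 par h2 (par2 par h2 a b) c) (par2 par h2 a (par2 par h2 b c))
  | comm (a b) : ACeq par h2 (par2 par h2 a b) (par2 par h2 b a)

namespace ParseAux

variable {σ : Sig} (par : σ.Symb) (h2 : σ.ar par = 2)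

/-- size of a term -/
def tsize : Term σ Empty → ℕ
  | .var x => x.elim
  | .app _ args => 1 + Finset.univ.sum (fun i => tsize (args i))

lemma tsize_pos (t : Term σ Empty) : 1 ≤ tsize t := by
  cases t with
  | var x => exact x.elim
  | app f args => simp [tsize]

lemma tsize_arg_lt (f : σ.Symb) (args : Fin (σ.ar f) → Term σ Empty) (j : Fin (σ.ar f)) :
    tsize (args j) < tsize (.app f args) := by
  have : tsize (args j) ≤ Finset.univ.sum (fun i => tsize (args i)) :=
    Finset.single_le_sum (f := fun i => tsize (args i)) (fun i _ => Nat.zero_le _)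
      (Finset.mem_univ j)
  simp only [tsize]; omega

/-- split a term into the list of its maximal non-parallel subterms -/
noncomputable def split : Term σ Empty → List (Term σ Empty)
  | .var x => x.elim
  | .app f args =>
    if h : f = par then
      split (args ⟨0, by rw [h, h2]; omega⟩) ++ split (args ⟨1, by rw [h, h2]; omega⟩)
    else [.app f args]

lemma split_ne_nil (t : Term σ Empty) : split par h2 t ≠ [] := by
  induction t with
  | var x => exact x.elim
  | app f args ih =>
    rw [split]
    split_ifs with h
    · simp only [ne_eq, List.append_eq_nil_iff]
      intro ⟨h1, _⟩; exact ih _ h1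
    · simp

lemma tsize_mem_split {t s : Term σ Empty} (hs : s ∈ split par h2 t) :
    tsize s ≤ tsize t := by
  induction t with
  | var x => exact x.elim
  | app f args ih =>
    rw [split] at hs
    split_ifs at hs with h
    · rcases List.mem_append.1 hs with h' | h'
      · exact le_trans (ih _ h') (le_of_lt (tsize_arg_lt f args _))
      · exact le_trans (ih _ h') (le_of_lt (tsize_arg_lt f args _))
    · simp at hs; subst hs; exact le_rfl

lemma mem_split_form {t s : Term σ Empty} (hs : s ∈ split par h2 t) :
    ∃ (g : σ.Symb) (cargs : Fin (σ.ar g) → Term σ Empty), s = .app g cargs ∧ g ≠ par := by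
  induction t with
  | var x => exact x.elim
  | app f args ih =>
    rw [split] at hs
    split_ifs at hs with h
    · rcases List.mem_append.1 hs with h' | h'
      · exact ih _ h'
      · exact ih _ h'
    · simp at hs; exact ⟨f, args, hs, h⟩

/-- the single edge of a non-parallel term -/
noncomputable def edge : Term σ Empty → ((f : σ.Symb) × (Fin (σ.ar f) → PT σ))
  | .var x => x.elim
  | .app f args => ⟨f, fun i => collapse par h2 (args i)⟩

lemma collapseL_eq_map (t : Term σ Empty) :
    collapseL par h2 t = (split par h2 t).map (edge par h2) := by
  induction t with
  | var x => exact x.elim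
  | app f args ih =>
    rw [collapseL, split]
    split_ifs with h
    · simp only [ih, List.map_append]
    · simp [edge, collapse]

/-- par2 congruence -/
lemma par2_congr {a a' b b' : Term σ Empty} (ha : ACeq par h2 a a') (hb : ACeq par h2 b b') :
    ACeq par h2 (par2 par h2 a b) (par2 par h2 a' b') := by
  refine ACeq.congr par _ _ (fun i => ?_)
  by_cases hi : (i : ℕ) = 0 <;> simp [hi, ha, hb]

lemma shuffle (x y c : Term σ Empty) :
    ACeq par h2 (par2 par h2 y (par2 par h2 x c)) (par2 par h2 x (par2 par h2 y c)) := by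
  refine ACeq.trans (ACeq.symm (ACeq.assoc y x c)) ?_
  refine ACeq.trans ?_ (ACeq.assoc x y c)
  exact par2_congr par h2 (ACeq.comm y x) (ACeq.refl c)

/-- fold of par2 with a nonempty list, head given separately -/
def fold1 : Term σ Empty → List (Term σ Empty) → Term σ Empty
  | a, [] => a
  | a, b :: l => par2 par h2 a (fold1 b l)

lemma fold1_congr {l l' : List (Term σ Empty)} (h : List.Forall₂ (ACeq par h2) l l') :
    ∀ {a a'}, ACeq par h2 a a' → ACeq par h2 (fold1 par h2 a l) (fold1 par h2 a' l') := by
  induction h with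
  | nil => intro a a' ha; exact ha
  | cons hab _ ih => intro a a' ha; exact par2_congr par h2 ha (ih hab)

lemma fold1_swap (x y : Term σ Empty) (l : List (Term σ Empty)) :
    ACeq par h2 (fold1 par h2 y (x :: l)) (fold1 par h2 x (y :: l)) := by
  cases l with
  | nil => exact ACeq.comm y x
  | cons c l => exact shuffle par h2 x y (fold1 par h2 c l)

lemma fold1_perm_aux : ∀ {l₁ l₂ : List (Term σ Empty)}, l₁.Perm l₂ →
    ∀ a l a' l', l₁ = a :: l → l₂ = a' :: l' →
    ACeq par h2 (fold1 par h2 a l) (fold1 par h2 a' l') := by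
  intro l₁ l₂ h
  induction h with
  | nil => intro a l a' l' h1 _; exact absurd h1 (by simp)
  | cons x h ih =>
    intro a l a' l' h1 h2'
    injection h1 with h1a h1b
    injection h2' with h2a h2b
    subst h1a h1b h2a h2b
    rename_i u v
    cases u with
    | nil => rw [h.symm.eq_nil]; exact ACeq.refl _
    | cons c ct =>
      cases v with
      | nil => exact absurd h.eq_nil (by simp)
      | cons d dt => exact par2_congr par h2 (ACeq.refl x) (ih c ct d dt rfl rfl)
  | swap x y l =>
    intro a l₀ a' l' h1 h2'
    injection h1 with h1a h1b
    injection h2' with h2a h2b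
    subst h1a h1b h2a h2b
    exact fold1_swap par h2 _ _ _
  | trans p₁ p₂ ih₁ ih₂ =>
    intro a l a' l' h1 h2'
    rename_i la lb lc
    have hb : lb ≠ [] := by
      intro hh; rw [hh] at p₁; rw [p₁.eq_nil] at h1; simp at h1
    cases lb with
    | nil => exact absurd rfl hb
    | cons b bt => exact ACeq.trans (ih₁ a l b bt h1 rfl) (ih₂ b bt a' l' rfl h2')

lemma fold1_perm {a a' : Term σ Empty} {l l' : List (Term σ Empty)}
    (h : (a :: l).Perm (a' :: l')) :
    ACeq par h2 (fold1 par h2 a l) (fold1 par h2 a' l') :=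
  fold1_perm_aux par h2 h a l a' l' rfl rfl

lemma fold1_append (b : Term σ Empty) (m : List (Term σ Empty)) :
    ∀ (l : List (Term σ Empty)) (a : Term σ Empty),
    ACeq par h2 (fold1 par h2 a (l ++ b :: m)) (par2 par h2 (fold1 par h2 a l) (fold1 par h2 b m)) := by
  intro l
  induction l with
  | nil => intro a; exact ACeq.refl _
  | cons c l ih =>
    intro a
    show ACeq par h2 (par2 par h2 a (fold1 par h2 c (l ++ b :: m))) _
    refine ACeq.trans (par2_congr par h2 (ACeq.refl a) (ih c)) ?_
    exact ACeq.symm (ACeq.assoc _ _ _)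

lemma unsplit : ∀ (t : Term σ Empty) (a : Term σ Empty) (l : List (Term σ Empty)),
    split par h2 t = a :: l → ACeq par h2 t (fold1 par h2 a l) := by
  intro t
  induction t with
  | var x => exact x.elim
  | app f args ih =>
    intro a l hsplit
    rw [split] at hsplit
    split_ifs at hsplit with h
    · have ha : σ.ar f = 2 := by rw [h, h2]
      obtain ⟨p, ps, hp⟩ := List.exists_cons_of_ne_nil
        (split_ne_nil par h2 (args ⟨0, by rw [h, h2]; omega⟩))
      obtain ⟨q, qs, hq⟩ := List.exists_cons_of_ne_nil
        (split_ne_nil par h2 (args ⟨1, by rw [h, h2]; omega⟩))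
      have heq : Term.app f args
          = par2 par h2 (args ⟨0, by rw [h, h2]; omega⟩) (args ⟨1, by rw [h, h2]; omega⟩) := by
        subst h
        unfold par2
        congr 1
        funext i
        by_cases hi : (i : ℕ) = 0
        · have hieq : i = ⟨0, by rw [h2]; omega⟩ := Fin.ext hi
          rw [hieq]; simp
        · have hi1 : (i : ℕ) = 1 := by have := i.isLt; omega
          have hieq : i = ⟨1, by rw [h2]; omega⟩ := Fin.ext hi1
          rw [hieq]; simp
      rw [hp, hq] at hsplit
      simp only [List.cons_append] at hsplit
      injection hsplit with hsa hsb
      subst hsa hsb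
      rw [heq]
      refine ACeq.trans (par2_congr par h2 (ih _ p ps hp) (ih _ q qs hq)) ?_
      exact ACeq.symm (fold1_append par h2 q qs ps p)
    · injection hsplit with hsa hsb
      subst hsa hsb
      exact ACeq.refl _

def EMatch (a b : (f : σ.Symb) × (Fin (σ.ar f) → PT σ)) : Prop :=
  ∃ h : b.1 = a.1, ∀ j, PTeq (a.2 j) (b.2 (Fin.cast (congrArg σ.ar h.symm) j))

lemma PTeq_ofList {l₁ l₂ : List ((f : σ.Symb) × (Fin (σ.ar f) → PT σ))}
    (h : PTeq (ofList l₁) (ofList l₂)) :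
    ∃ e : Fin l₁.length ≃ Fin l₂.length, ∀ i, EMatch (l₁.get i) (l₂.get (e i)) := by
  cases h with
  | mk n n' f f' c c' e hf hc => exact ⟨e, fun i => ⟨hf i, fun j => hc i j⟩⟩

lemma perm_ofFn_equiv {α : Type*} {m n : ℕ} (e : Fin m ≃ Fin n) (g : Fin n → α) :
    (List.ofFn (fun i => g (e i))).Perm (List.ofFn g) := by
  rw [List.ofFn_eq_map, List.ofFn_eq_map, show (fun i => g (e i)) = g ∘ e from rfl,
    ← List.map_map]
  refine List.Perm.map g ?_
  refine (List.perm_ext_iff_of_nodup ?_ ?_).2 ?_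
  · exact (List.nodup_finRange m).map e.injective
  · exact List.nodup_finRange n
  · intro j
    simp only [List.mem_map, List.mem_finRange, true_and, iff_true]
    exact ⟨e.symm j, by simp⟩

lemma main_aux : ∀ (N : ℕ) (t₁ t₂ : Term σ Empty), tsize t₁ ≤ N →
    PTeq (collapse par h2 t₁) (collapse par h2 t₂) → ACeq par h2 t₁ t₂ := by
  intro N
  induction N with
  | zero => intro t₁ _ hle _; have := tsize_pos t₁; omega
  | succ N ih =>
    intro t₁ t₂ hle h
    rw [collapse, collapse, collapseL_eq_map, collapseL_eq_map] at h
    obtain ⟨e, he⟩ := PTeq_ofList h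
    have hl₁ : ((split par h2 t₁).map (edge par h2)).length = (split par h2 t₁).length :=
      List.length_map _
    have hl₂ : ((split par h2 t₂).map (edge par h2)).length = (split par h2 t₂).length :=
      List.length_map _
    let e' : Fin (split par h2 t₁).length ≃ Fin (split par h2 t₂).length :=
      (finCongr hl₁.symm).trans (e.trans (finCongr hl₂))
    have key : ∀ i : Fin (split par h2 t₁).length,
        ACeq par h2 ((split par h2 t₁).get i) ((split par h2 t₂).get (e' i)) := by
      intro i
      have hE := he ((finCongr hl₁.symm) i)
      have hmem₁ : (split par h2 t₁).get i ∈ split par h2 t₁ := List.get_mem _ i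
      have hmem₂ : (split par h2 t₂).get (e' i) ∈ split par h2 t₂ :=
        List.get_mem _ (e' i)
      obtain ⟨g, cargs, hform, hgpar⟩ := mem_split_form par h2 hmem₁
      obtain ⟨g', c'args, hform', _⟩ := mem_split_form par h2 hmem₂
      have hm : tsize ((split par h2 t₁).get i) ≤ tsize t₁ := tsize_mem_split par h2 hmem₁
      simp only [List.get_eq_getElem, List.getElem_map, finCongr_apply, Fin.coe_cast,
        Equiv.trans_apply, e'] at hE hform hform' hm ⊢
      rw [hform, hform'] at hE ⊢
      rw [hform] at hm
      simp only [edge, EMatch] at hE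
      obtain ⟨hg, hch⟩ := hE
      have hg' : g' = g := hg
      subst hg'
      refine ACeq.congr _ cargs c'args (fun j => ?_)
      have hlt := tsize_arg_lt _ cargs j
      exact ih (cargs j) (c'args j) (by omega) (hch j)
    obtain ⟨a, l, hs₁⟩ := List.exists_cons_of_ne_nil (split_ne_nil par h2 t₁)
    obtain ⟨a', l', hs₂⟩ := List.exists_cons_of_ne_nil (split_ne_nil par h2 t₂)
    set L'' := List.ofFn (fun i => (split par h2 t₂).get (e' i)) with hL''
    have hperm : L''.Perm (split par h2 t₂) := by
      have hp := perm_ofFn_equiv e' (split par h2 t₂).get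
      rwa [List.ofFn_get] at hp
    have hfa : List.Forall₂ (ACeq par h2) (split par h2 t₁) L'' := by
      rw [List.forall₂_iff_get]
      refine ⟨by simp [hL''], fun i h₁ h₂ => ?_⟩
      simpa [hL'', List.getElem_ofFn] using key ⟨i, h₁⟩
    have hL''ne : L'' ≠ [] := by
      intro hh
      have hlen := congrArg List.length hh
      rw [hL''] at hlen
      simp [hs₁] at hlen
    obtain ⟨b, m, hbm⟩ := List.exists_cons_of_ne_nil hL''ne
    rw [hs₁, hbm] at hfa
    rw [hbm, hs₂] at hperm
    obtain ⟨hab, hlm⟩ := List.forall₂_cons.1 hfa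
    exact ACeq.trans (unsplit par h2 t₁ a l hs₁)
      (ACeq.trans (fold1_congr par h2 hlm hab)
        (ACeq.trans (fold1_perm par h2 hperm) (ACeq.symm (unsplit par h2 t₂ a' l' hs₂))))

end ParseAux
/-- two ground terms with the same parse tree (up to permutation
of edges at each node) are equal modulo associativity and commutativity of the
parallel composition. -/
theorem parse_tree_unique_up_to_AC {σ : Sig} (par : σ.Symb) (h2 : σ.ar par = 2)
    (t₁ t₂ : Term σ Empty)
    (h : PTeq (collapse par h2 t₁) (collapse par h2 t₂)) :
    ACeq par h2 t₁ t₂ := by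
  exact ParseAux.main_aux par h2 (ParseAux.tsize t₁) t₁ t₂ le_rfl h
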